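/- Let S and T be finite-dimensional operator systems of the same dimension n. Then there exists a surjective ucp map φ : S → T. -/

import Mathlib

open scoped ComplexOrder TensorProduct

noncomputable section

/-- A family of matrix cones over `V`, one in each matrix level `Mₙ(V)`. -/
def ConeFam (V : Type*) : Type _ :=
  ∀ n : ℕ, Set (Matrix (Fin n) (Fin n) V)

/-- Entrywise application of a linear map to a matrix (the `n`-th amplification). -/
def mmap {V W : Type*} [AddCommGroup V] [Module ℂ V] [AddCommGroup W] [Module ℂ W]
    {n : ℕ} (φ : V →ₗ[ℂ] W) (M : Matrix (Fin n) (Fin n) V) : Matrix (Fin n) (Fin n) W :=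
  M.map fun v => φ v

/-- Scalar congruence `A⋆ M A` of a `V`-valued matrix by a scalar matrix. -/
def matCongr {V : Type*} [AddCommGroup V] [Module ℂ V] {m n : ℕ}
    (A : Matrix (Fin m) (Fin n) ℂ) (M : Matrix (Fin m) (Fin m) V) :
    Matrix (Fin n) (Fin n) V :=
  Matrix.of fun i j => ∑ k, ∑ l, (star (A k i) * A l j) • M k l

/-- The diagonal matrix with constant diagonal entry `e`. -/
def unitMat {V : Type*} [AddCommGroup V] [Module ℂ V] (e : V) (n : ℕ) :
    Matrix (Fin n) (Fin n) V :=
  Matrix.of fun i j => if i = j then e else 0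

/-- An abstract operator system: a matrix ordered `*`-vector space together with an
Archimedean matrix order unit (Choi–Effros axioms). -/
structure OSStruct (V : Type*) [AddCommGroup V] [Module ℂ V]
    [StarAddMonoid V] [StarModule ℂ V] where
  pos : ConeFam V
  unit : V
  unit_sa : star unit = unit
  pos_sa : ∀ {n : ℕ} {M : Matrix (Fin n) (Fin n) V}, M ∈ pos n → M.conjTranspose = M
  pos_add : ∀ {n : ℕ} {M N : Matrix (Fin n) (Fin n) V}, M ∈ pos n → N ∈ pos n → M + N ∈ pos n
  pos_smul : ∀ {n : ℕ} (r : ℝ) {M : Matrix (Fin n) (Fin n) V},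
      0 ≤ r → M ∈ pos n → (r : ℂ) • M ∈ pos n
  pos_strict : ∀ {n : ℕ} {M : Matrix (Fin n) (Fin n) V}, M ∈ pos n → -M ∈ pos n → M = 0
  pos_congr : ∀ {m n : ℕ} (A : Matrix (Fin m) (Fin n) ℂ) {M : Matrix (Fin m) (Fin m) V},
      M ∈ pos m → matCongr A M ∈ pos n
  unit_pos : ∀ n, unitMat unit n ∈ pos n
  orderUnit : ∀ {n : ℕ} (M : Matrix (Fin n) (Fin n) V), M.conjTranspose = M →
      ∃ r : ℝ, 0 < r ∧ (r : ℂ) • unitMat unit n + M ∈ pos n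
  archimedean : ∀ {n : ℕ} (M : Matrix (Fin n) (Fin n) V),
      (∀ ε : ℝ, 0 < ε → (ε : ℂ) • unitMat unit n + M ∈ pos n) → M ∈ pos n

section Maps
variable {V W : Type*} [AddCommGroup V] [Module ℂ V] [AddCommGroup W] [Module ℂ W]

/-- `k`-positivity of a linear map with respect to given matrix cone families. -/
def osKPos (C : ConeFam V) (D : ConeFam W) (k : ℕ) (φ : V →ₗ[ℂ] W) : Prop :=
  ∀ M ∈ C k, mmap φ M ∈ D k

/-- Complete positivity. -/
def osCP (C : ConeFam V) (D : ConeFam W) (φ : V →ₗ[ℂ] W) : Prop :=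
  ∀ k, osKPos C D k φ

/-- Unital complete positivity. -/
def osUCP (C : ConeFam V) (e : V) (D : ConeFam W) (f : W) (φ : V →ₗ[ℂ] W) : Prop :=
  osCP C D φ ∧ φ e = f

/-- Complete order embedding. -/
def osCOEmbedding (C : ConeFam V) (D : ConeFam W) (φ : V →ₗ[ℂ] W) : Prop :=
  Function.Injective φ ∧ osCP C D φ ∧
    ∀ (n : ℕ) (M : Matrix (Fin n) (Fin n) V), mmap φ M ∈ D n → M ∈ C n

/-- Operator system quotient map: a surjective completely positive map such that the
induced map on the quotient by its kernel is a complete order isomorphism, expressed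
via the standard `ε`-lifting characterisation of positive matrices. -/
def osQuotientMap (C : ConeFam V) (D : ConeFam W) (f : W) (φ : V →ₗ[ℂ] W) : Prop :=
  Function.Surjective φ ∧ osCP C D φ ∧
    ∀ (n : ℕ), ∀ N ∈ D n, ∀ ε : ℝ, 0 < ε →
      ∃ M ∈ C n, mmap φ M = N + (ε : ℂ) • unitMat f n

/-- Positivity of a single element (as a `1 × 1` matrix). -/
def posElem (C : ConeFam V) (v : V) : Prop :=
  (Matrix.of (fun _ _ => v) : Matrix (Fin 1) (Fin 1) V) ∈ C 1

/-- A state: a unital positive linear functional. -/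
def osState (C : ConeFam V) (e : V) (f : Module.Dual ℂ V) : Prop :=
  f e = 1 ∧ ∀ v, posElem C v → 0 ≤ f v

/-- A faithful state. -/
def osFaithfulState (C : ConeFam V) (e : V) (f : Module.Dual ℂ V) : Prop :=
  osState C e f ∧ ∀ v, posElem C v → f v = 0 → v = 0

end Maps

section Dual
variable {V : Type*} [AddCommGroup V] [Module ℂ V]

/-- Flatten a matrix of scalar matrices to a scalar matrix over the product index. -/
def blockify {n : ℕ} {ι : Type*} (M : Matrix (Fin n) (Fin n) (Matrix ι ι ℂ)) :
    Matrix (Fin n × ι) (Fin n × ι) ℂ :=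
  Matrix.of fun p q => M p.1 q.1 p.2 q.2

/-- The matrix-valued map associated with a matrix of functionals. -/
def matValued {n : ℕ} (F : Matrix (Fin n) (Fin n) (Module.Dual ℂ V)) :
    V →ₗ[ℂ] Matrix (Fin n) (Fin n) ℂ where
  toFun v := Matrix.of fun i j => F i j v
  map_add' a b := by ext i j; simp
  map_smul' c a := by ext i j; simp

/-- Complete positivity of a map into a matrix algebra `Mₖ(ℂ)`. -/
def CPIntoMat (C : ConeFam V) {k : ℕ} (φ : V →ₗ[ℂ] Matrix (Fin k) (Fin k) ℂ) : Prop :=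
  ∀ (n : ℕ), ∀ M ∈ C n, (blockify (mmap φ M)).PosSemidef

/-- The dual matrix ordering on `Sᵈ`: a matrix of functionals is positive iff the
associated matrix-valued map is completely positive. -/
def osDualCone (C : ConeFam V) : ConeFam (Module.Dual ℂ V) :=
  fun _ => { F | CPIntoMat C (matValued F) }

/-- The induced (subsystem) matrix ordering on a subspace. -/
def osSubCone (C : ConeFam V) (S₀ : Submodule ℂ V) : ConeFam S₀ :=
  fun n => { M | mmap S₀.subtype M ∈ C n }

end Dual

/-- A null subspace: a `*`-closed subspace containing no nonzero positive element. -/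
def IsNullSubspace {V : Type*} [AddCommGroup V] [Module ℂ V] [StarAddMonoid V]
    (C : ConeFam V) (J : Submodule ℂ V) : Prop :=
  (∀ v ∈ J, star v ∈ J) ∧ ∀ v ∈ J, posElem C v → v = 0

/-- The canonical involution on the dual space: `f⋆ (s) = conj (f (s⋆))`. -/
def dstar {V : Type*} [AddCommGroup V] [Module ℂ V] [StarAddMonoid V] [StarModule ℂ V]
    (f : Module.Dual ℂ V) : Module.Dual ℂ V where
  toFun v := starRingEnd ℂ (f (star v))
  map_add' a b := by simp
  map_smul' c a := by
    simp only [star_smul, LinearMap.map_smul, smul_eq_mul, map_mul, RingHom.id_apply,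
      starRingEnd_apply, star_star]

section TensorDefs
variable {V W : Type*} [AddCommGroup V] [Module ℂ V] [AddCommGroup W] [Module ℂ W]

/-- Kronecker product of scalar matrices. -/
def osKron {k m : ℕ} (X : Matrix (Fin k) (Fin k) ℂ) (Y : Matrix (Fin m) (Fin m) ℂ) :
    Matrix (Fin k × Fin m) (Fin k × Fin m) ℂ :=
  Matrix.of fun p q => X p.1 q.1 * Y p.2 q.2

/-- The map `φ ⊗ ψ : V ⊗ W → M_k ⊗ M_m = M_{km}`. -/
def osFuse {k m : ℕ} (φ : V →ₗ[ℂ] Matrix (Fin k) (Fin k) ℂ)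
    (ψ : W →ₗ[ℂ] Matrix (Fin m) (Fin m) ℂ) :
    V ⊗[ℂ] W →ₗ[ℂ] Matrix (Fin k × Fin m) (Fin k × Fin m) ℂ :=
  TensorProduct.lift (LinearMap.mk₂ ℂ (fun v w => osKron (φ v) (ψ w))
    (fun v v' w => by ext p q; simp [osKron, add_mul])
    (fun c v w => by ext p q; simp [osKron, smul_eq_mul]; ring)
    (fun v w w' => by ext p q; simp [osKron, mul_add])
    (fun c v w => by ext p q; simp [osKron, smul_eq_mul]; ring))

/-- The minimal operator system tensor cone. -/
def osMin (C : ConeFam V) (e : V) (D : ConeFam W) (f : W) : ConeFam (V ⊗[ℂ] W) :=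
  fun n => { U | ∀ (k m : ℕ) (φ : V →ₗ[ℂ] Matrix (Fin k) (Fin k) ℂ)
      (ψ : W →ₗ[ℂ] Matrix (Fin m) (Fin m) ℂ),
      CPIntoMat C φ → φ e = 1 → CPIntoMat D ψ → ψ f = 1 →
      (blockify (mmap (osFuse φ ψ) U)).PosSemidef }

/-- The elementary tensor `P ⊗ Q` of a `V`-valued and a `W`-valued matrix. -/
def tensorElemMat {k m : ℕ} (P : Matrix (Fin k) (Fin k) V) (Q : Matrix (Fin m) (Fin m) W) :
    Matrix (Fin (k * m)) (Fin (k * m)) (V ⊗[ℂ] W) :=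
  Matrix.of fun i j =>
    P (finProdFinEquiv.symm i).1 (finProdFinEquiv.symm j).1 ⊗ₜ[ℂ]
      Q (finProdFinEquiv.symm i).2 (finProdFinEquiv.symm j).2

/-- The cones `Dₙ^max` of the maximal tensor product. -/
def osMaxD (C : ConeFam V) (D : ConeFam W) : ConeFam (V ⊗[ℂ] W) :=
  fun n => { U | ∃ (k m : ℕ) (P : Matrix (Fin k) (Fin k) V) (Q : Matrix (Fin m) (Fin m) W)
      (A : Matrix (Fin (k * m)) (Fin n) ℂ),
      P ∈ C k ∧ Q ∈ D m ∧ U = matCongr A (tensorElemMat P Q) }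

/-- The maximal operator system tensor cone (Archimedeanization of `Dₙ^max`). -/
def osMax (C : ConeFam V) (e : V) (D : ConeFam W) (f : W) : ConeFam (V ⊗[ℂ] W) :=
  fun n => { U | ∀ ε : ℝ, 0 < ε → (ε : ℂ) • unitMat (e ⊗ₜ[ℂ] f) n + U ∈ osMaxD C D n }

end TensorDefs

/-- The canonical matrix ordering of a C*-algebra: `M ≥ 0` iff `M = N⋆ N`. -/
def cstarPos (A : Type*) [Ring A] [StarRing A] [Algebra ℂ A] : ConeFam A :=
  fun n => { M | ∃ N : Matrix (Fin n) (Fin n) A, M = N.conjTranspose * N }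

/-- The (local) lifting property of a finite dimensional operator system: every ucp map
into a quotient C*-algebra `A/I` (presented by a surjective unital `*`-homomorphism)
admits a completely positive lift. -/
def osLiftingProperty {V : Type*} [AddCommGroup V] [Module ℂ V] (C : ConeFam V) (e : V) :
    Prop :=
  ∀ (A B : Type) [CStarAlgebra A] [CStarAlgebra B] (q : A →⋆ₐ[ℂ] B),
    Function.Surjective (⇑q) →
    ∀ φ : V →ₗ[ℂ] B, osUCP C e (cstarPos B) 1 φ →
      ∃ ψ : V →ₗ[ℂ] A, osCP C (cstarPos A) ψ ∧ q.toAlgHom.toLinearMap ∘ₗ ψ = φ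

/-- Exactness of a (finite dimensional) operator system: for every quotient of C*-algebras
the natural map `(S ⊗_min A)/(S ⊗ I) → S ⊗_min (A/I)` is a complete order isomorphism. -/
def osExact {V : Type*} [AddCommGroup V] [Module ℂ V] (C : ConeFam V) (e : V) : Prop :=
  ∀ (A B : Type) [CStarAlgebra A] [CStarAlgebra B] (q : A →⋆ₐ[ℂ] B),
    Function.Surjective (⇑q) →
    ∀ (n : ℕ) (U : Matrix (Fin n) (Fin n) (V ⊗[ℂ] B)),
      U ∈ osMin C e (cstarPos B) (1 : B) n ↔
        ∀ ε : ℝ, 0 < ε → ∃ P ∈ osMin C e (cstarPos A) (1 : A) n,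
          mmap (LinearMap.lTensor V q.toAlgHom.toLinearMap) P
            = U + (ε : ℂ) • unitMat (e ⊗ₜ[ℂ] (1 : B)) n

/-- Kirchberg's local lifting property (LLP) of a unital C*-algebra. -/
def cstarLLP (U : Type*) [CStarAlgebra U] : Prop :=
  ∀ (A B : Type) [CStarAlgebra A] [CStarAlgebra B] (q : A →⋆ₐ[ℂ] B),
    Function.Surjective (⇑q) →
    ∀ (θ : U →ₗ[ℂ] B), osUCP (cstarPos U) 1 (cstarPos B) 1 θ →
    ∀ (F : Submodule ℂ U), FiniteDimensional ℂ F → (∀ x ∈ F, star x ∈ F) →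
    ∀ (h1 : (1 : U) ∈ F),
      ∃ ψ : (F : Type _) →ₗ[ℂ] A,
        osUCP (osSubCone (cstarPos U) F) ⟨1, h1⟩ (cstarPos A) 1 ψ ∧
        q.toAlgHom.toLinearMap ∘ₗ ψ = θ ∘ₗ F.subtype

end

namespace St13

open Module

variable {V : Type} [AddCommGroup V] [Module ℂ V] [StarAddMonoid V] [StarModule ℂ V]

section Basic
variable (S : OSStruct V)

/-- abbreviation for the set of positive elements -/
def Q : Set V := {v | posElem S.pos v}

variable {S}

lemma mem_pos_one_iff {M : Matrix (Fin 1) (Fin 1) V} :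
    M ∈ S.pos 1 ↔ posElem S.pos (M 0 0) := by
  have : M = Matrix.of (fun _ _ => M 0 0) := by
    ext i j
    have hi : i = 0 := Subsingleton.elim _ _
    have hj : j = 0 := Subsingleton.elim _ _
    rw [hi, hj]; rfl
  constructor
  · intro h; unfold posElem; rwa [← this]
  · intro h; unfold posElem at h; rwa [this]

lemma pe_unit : posElem S.pos S.unit := by
  have h := S.unit_pos 1
  rw [mem_pos_one_iff] at h
  simpa [unitMat] using h

lemma pe_zero : posElem S.pos (0 : V) := by
  have h := S.pos_smul (n := 1) (0 : ℝ) le_rfl (S.unit_pos 1)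
  rw [mem_pos_one_iff] at h
  simpa using h

lemma pe_add {v w : V} (hv : posElem S.pos v) (hw : posElem S.pos w) :
    posElem S.pos (v + w) := by
  have h := S.pos_add hv hw
  rw [mem_pos_one_iff] at h
  simpa using h

lemma pe_smul {v : V} (r : ℝ) (hr : 0 ≤ r) (hv : posElem S.pos v) :
    posElem S.pos ((r : ℂ) • v) := by
  have h := S.pos_smul r hr hv
  rw [mem_pos_one_iff] at h
  simpa using h

lemma pe_star {v : V} (hv : posElem S.pos v) : star v = v := by
  have h := S.pos_sa hv
  have := congrFun (congrFun h 0) 0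
  simpa [Matrix.conjTranspose] using this

lemma pe_strict {v : V} (hv : posElem S.pos v) (hv' : posElem S.pos (-v)) : v = 0 := by
  have h2 : -(Matrix.of (fun _ _ => v) : Matrix (Fin 1) (Fin 1) V) ∈ S.pos 1 := by
    rw [mem_pos_one_iff]; simpa using hv'
  have := S.pos_strict hv h2
  have := congrFun (congrFun this 0) 0
  simpa using this

lemma pe_archimedean {v : V}
    (h : ∀ ε : ℝ, 0 < ε → posElem S.pos ((ε : ℂ) • S.unit + v)) :
    posElem S.pos v := by
  apply S.archimedean
  intro ε hε
  have he : (ε : ℂ) • unitMat S.unit 1 + (Matrix.of (fun _ _ => v) : Matrix (Fin 1) (Fin 1) V)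
      = Matrix.of (fun _ _ => (ε : ℂ) • S.unit + v) := by
    ext i j
    simp [unitMat, Matrix.add_apply, Matrix.smul_apply, Subsingleton.elim i j]
  rw [he]
  exact h ε hε

lemma pe_orderUnit {a : V} (ha : star a = a) :
    ∃ r : ℝ, 0 < r ∧ posElem S.pos ((r : ℂ) • S.unit + a) := by
  obtain ⟨r, hr, hmem⟩ := S.orderUnit (Matrix.of (fun _ _ => a) : Matrix (Fin 1) (Fin 1) V)
    (by ext i j; simpa [Matrix.conjTranspose] using ha)
  refine ⟨r, hr, ?_⟩
  rw [mem_pos_one_iff] at hmem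
  simpa [unitMat] using hmem

/-- pad the unit coefficient -/
lemma pe_pad {r r' : ℝ} {x : V} (h : posElem S.pos ((r : ℂ) • S.unit + x))
    (hle : r ≤ r') : posElem S.pos ((r' : ℂ) • S.unit + x) := by
  have h2 : posElem S.pos (((r' - r : ℝ) : ℂ) • S.unit) :=
    pe_smul _ (by linarith) pe_unit
  have := pe_add h2 h
  have he : ((r' - r : ℝ) : ℂ) • S.unit + ((r : ℂ) • S.unit + x)
      = (r' : ℂ) • S.unit + x := by
    push_cast
    rw [← add_assoc, ← add_smul]
    ring_nf
  rwa [he] at this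

/-- decomposition of a self-adjoint element as difference of positives -/
lemma sa_sub {a : V} (ha : star a = a) :
    ∃ p q : V, posElem S.pos p ∧ posElem S.pos q ∧ a = p - q := by
  obtain ⟨r, hr, h⟩ := pe_orderUnit (S := S) ha
  exact ⟨(r : ℂ) • S.unit + a, (r : ℂ) • S.unit,
    h, pe_smul r hr.le pe_unit, by abel⟩

end Basic

end St13
namespace St13

variable {V : Type} [AddCommGroup V] [Module ℂ V] [StarAddMonoid V] [StarModule ℂ V]

noncomputable section

/-- self-adjoint part -/
def saPart (v : V) : V := (2⁻¹ : ℂ) • (v + star v)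

/-- the other self-adjoint component: `v = saPart v + I • sbPart v` -/
def sbPart (v : V) : V := saPart (-(Complex.I • v))

lemma star_saPart (v : V) : star (saPart v) = saPart v := by
  simp only [saPart, star_smul, star_add, star_star, Complex.star_def]
  rw [show (starRingEnd ℂ) 2⁻¹ = 2⁻¹ by norm_num [Complex.ext_iff]]
  rw [add_comm]

lemma star_sbPart (v : V) : star (sbPart v) = sbPart v := star_saPart _

lemma saPart_of_sa {v : V} (hv : star v = v) : saPart v = v := by
  simp only [saPart, hv]
  rw [← two_smul ℂ v, smul_smul]
  norm_num

lemma saPart_add (v w : V) : saPart (v + w) = saPart v + saPart w := by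
  simp only [saPart, star_add, smul_add]
  module

lemma saPart_realSmul (r : ℝ) (v : V) : saPart ((r : ℂ) • v) = (r : ℂ) • saPart v := by
  simp only [saPart, star_smul, Complex.star_def, Complex.conj_ofReal, ← smul_add, smul_smul]
  rw [mul_comm]

lemma I_smul_sbPart (v : V) :
    Complex.I • sbPart v = (2⁻¹ : ℂ) • v - (2⁻¹ : ℂ) • star v := by
  have hII : Complex.I * (2⁻¹ * Complex.I) = -2⁻¹ := by
    rw [mul_comm (2⁻¹ : ℂ), ← mul_assoc, Complex.I_mul_I]; ring
  simp only [sbPart, saPart, star_neg, star_smul, Complex.star_def, Complex.conj_I,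
    smul_add, smul_smul, smul_neg, neg_smul, neg_neg, hII]
  module

lemma decomp (v : V) : v = saPart v + Complex.I • sbPart v := by
  rw [I_smul_sbPart, saPart]
  module

lemma saPart_I_smul (v : V) : saPart (Complex.I • v) = - sbPart v := by
  simp only [sbPart, saPart, star_neg, star_smul, Complex.star_def, Complex.conj_I,
    neg_smul, smul_neg, neg_neg, neg_add_rev, smul_add]
  module

section Func
variable {S : OSStruct V} {f : Module.Dual ℂ V}

/-- positivity of a functional -/
def IsPosF (S : OSStruct V) (f : Module.Dual ℂ V) : Prop :=
  ∀ v, posElem S.pos v → 0 ≤ f v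

lemma isPosF_im_zero (hf : IsPosF S f) {a : V} (ha : star a = a) : (f a).im = 0 := by
  obtain ⟨p, q, hp, hq, rfl⟩ := sa_sub (S := S) ha
  have h1 := (Complex.le_def.mp (hf p hp)).2
  have h2 := (Complex.le_def.mp (hf q hq)).2
  simp [map_sub, Complex.sub_im, ← h1, ← h2]

lemma isPosF_star (hf : IsPosF S f) (v : V) : f (star v) = (starRingEnd ℂ) (f v) := by
  have key : ∀ a : V, star a = a → (starRingEnd ℂ) (f a) = f a := by
    intro a ha
    exact Complex.conj_eq_iff_im.mpr (isPosF_im_zero hf ha)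
  have hv := decomp v
  have hsv : star v = saPart v - Complex.I • sbPart v := by
    nth_rewrite 1 [hv]
    simp only [star_add, star_smul, Complex.star_def, Complex.conj_I, star_saPart,
      star_sbPart, neg_smul]
    abel
  rw [hsv]
  conv_rhs => rw [hv]
  simp only [map_sub, map_add, map_smul, map_mul, smul_eq_mul]
  rw [key _ (star_saPart v), key _ (star_sbPart v)]
  simp [Complex.conj_I]
  ring

lemma isPosF_unit_eq_zero (hf : IsPosF S f) (h0 : f S.unit = 0) : f = 0 := by
  have hpos : ∀ p, posElem S.pos p → f p = 0 := by
    intro p hp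
    have hps : star p = p := pe_star hp
    obtain ⟨r, hr, hru⟩ := pe_orderUnit (S := S) (a := -p)
      (by rw [star_neg, hps])
    have h1 := hf _ hru
    rw [map_add, map_smul, h0, smul_eq_mul, mul_zero, zero_add, map_neg] at h1
    have h2 := hf p hp
    have h3 : f p ≤ 0 := by simpa using h1
    exact le_antisymm h3 h2
  have hsa : ∀ a : V, star a = a → f a = 0 := by
    intro a ha
    obtain ⟨p, q, hp, hq, rfl⟩ := sa_sub (S := S) ha
    rw [map_sub, hpos p hp, hpos q hq, sub_zero]
  ext v
  rw [decomp v, map_add, map_smul, hsa _ (star_saPart v), hsa _ (star_sbPart v)]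
  simp

lemma isPosF_unit_re_pos (hf : IsPosF S f) (hne : f ≠ 0) :
    ∃ r : ℝ, 0 < r ∧ f S.unit = (r : ℂ) := by
  have h := hf S.unit pe_unit
  obtain ⟨hre, him⟩ := Complex.le_def.mp h
  refine ⟨(f S.unit).re, ?_, by rw [Complex.ext_iff]; constructor <;> simp [← him]⟩
  rcases lt_or_eq_of_le hre with h' | h'
  · simpa using h'
  · exfalso
    apply hne
    apply isPosF_unit_eq_zero hf
    rw [Complex.ext_iff]
    constructor <;> simp [← h', ← him]

end Func

end

end St13
namespace St13

noncomputable section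

variable {V W : Type} [AddCommGroup V] [Module ℂ V] [StarAddMonoid V] [StarModule ℂ V]
  [AddCommGroup W] [Module ℂ W] [StarAddMonoid W] [StarModule ℂ W]

lemma mmap_add {k : ℕ} (φ ψ : V →ₗ[ℂ] W) (M : Matrix (Fin k) (Fin k) V) :
    mmap (φ + ψ) M = mmap φ M + mmap ψ M := by
  ext i j
  simp [mmap, Matrix.add_apply]

lemma mmap_sum {k : ℕ} {ι : Type*} (s : Finset ι) (φ : ι → (V →ₗ[ℂ] W))
    (M : Matrix (Fin k) (Fin k) V) :
    mmap (∑ i ∈ s, φ i) M = ∑ i ∈ s, mmap (φ i) M := by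
  classical
  induction s using Finset.induction_on with
  | empty => ext i j; simp [mmap]
  | insert _ _ h ih => rw [Finset.sum_insert h, Finset.sum_insert h, mmap_add, ih]

lemma pos_zero (T : OSStruct W) (k : ℕ) : (0 : Matrix (Fin k) (Fin k) W) ∈ T.pos k := by
  have := T.pos_smul (n := k) (0 : ℝ) le_rfl (T.unit_pos k)
  simpa using this

lemma pos_sum (T : OSStruct W) {k : ℕ} {ι : Type*} (s : Finset ι)
    (F : ι → Matrix (Fin k) (Fin k) W) (h : ∀ i ∈ s, F i ∈ T.pos k) :
    (∑ i ∈ s, F i) ∈ T.pos k := by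
  classical
  induction s using Finset.induction_on with
  | empty => simpa using pos_zero T k
  | insert _ _ hni ih =>
    rw [Finset.sum_insert hni]
    exact T.pos_add (h _ (Finset.mem_insert_self _ _))
      (ih (fun i hi => h i (Finset.mem_insert_of_mem hi)))

lemma osCP_add {S : OSStruct V} {T : OSStruct W} {φ ψ : V →ₗ[ℂ] W}
    (hφ : osCP S.pos T.pos φ) (hψ : osCP S.pos T.pos ψ) :
    osCP S.pos T.pos (φ + ψ) := by
  intro k M hM
  rw [mmap_add]
  exact T.pos_add (hφ k M hM) (hψ k M hM)

lemma osCP_sum {S : OSStruct V} {T : OSStruct W} {ι : Type*} (s : Finset ι)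
    (φ : ι → (V →ₗ[ℂ] W)) (h : ∀ i ∈ s, osCP S.pos T.pos (φ i)) :
    osCP S.pos T.pos (∑ i ∈ s, φ i) := by
  intro k M hM
  rw [mmap_sum]
  exact pos_sum T _ _ (fun i hi => h i hi k M hM)

/-- the scalar matrix associated with a positive functional applied entrywise to a
positive matrix is positive semidefinite -/
lemma isPosF_matrix_psd {S : OSStruct V} {f : Module.Dual ℂ V} (hf : IsPosF S f)
    {k : ℕ} {M : Matrix (Fin k) (Fin k) V} (hM : M ∈ S.pos k) :
    (Matrix.of (fun i j => f (M i j)) : Matrix (Fin k) (Fin k) ℂ).PosSemidef := by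
  refine Matrix.PosSemidef.of_dotProduct_mulVec_nonneg ?_ ?_
  · ext i j
    have hsa : star (M j i) = M i j := by
      have := congrFun (congrFun (S.pos_sa hM) i) j
      simpa [Matrix.conjTranspose_apply] using this
    simp only [Matrix.conjTranspose_apply, Matrix.of_apply]
    rw [Complex.star_def, ← isPosF_star hf, hsa]
  · intro x
    -- use congruence by the column vector x
    have hcong := S.pos_congr (Matrix.of (fun (i : Fin k) (_ : Fin 1) => x i)) hM
    rw [mem_pos_one_iff] at hcong
    have h := hf _ hcong
    have he : (matCongr (Matrix.of fun (i : Fin k) (_ : Fin 1) => x i) M) 0 0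
        = ∑ p, ∑ q, (star (x p) * x q) • M p q := by
      simp [matCongr]
    rw [he] at h
    have : f (∑ p, ∑ q, (star (x p) * x q) • M p q)
        = dotProduct (star x) ((Matrix.of (fun i j => f (M i j))).mulVec x) := by
      rw [map_sum]
      simp only [map_sum, map_smul, smul_eq_mul]
      simp only [dotProduct, Matrix.mulVec, Matrix.of_apply, Pi.star_apply,
        Finset.mul_sum]
      congr 1
      ext p
      congr 1
      ext q
      ring
    rwa [this] at h

/-- rank one maps `v ↦ f v • w` with `f` positive and `w` positive are completely
positive -/
lemma osCP_smulRight {S : OSStruct V} {T : OSStruct W} {f : Module.Dual ℂ V}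
    (hf : IsPosF S f) {w : W} (hw : posElem T.pos w) :
    osCP S.pos T.pos (f.smulRight w) := by
  intro k M hM
  have hpsd := isPosF_matrix_psd hf hM
  obtain ⟨B, hB⟩ : ∃ B : Matrix (Fin k) (Fin k) ℂ,
      (Matrix.of (fun i j => f (M i j)) : Matrix (Fin k) (Fin k) ℂ) = B.conjTranspose * B := by
    classical
    open scoped MatrixOrder in
    obtain ⟨B, hB⟩ := CStarAlgebra.nonneg_iff_eq_star_mul_self.mp hpsd.nonneg
    exact ⟨B, hB⟩
  have key : mmap (f.smulRight w) M
      = ∑ r : Fin k, matCongr (Matrix.of (fun (_ : Fin 1) (j : Fin k) => B r j))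
          (Matrix.of (fun _ _ => w)) := by
    ext i j
    have h1 : (∑ r : Fin k, matCongr (Matrix.of (fun (_ : Fin 1) (j : Fin k) => B r j))
        (Matrix.of (fun _ _ => w))) i j
        = ∑ r : Fin k, (star (B r i) * B r j) • w := by
      rw [Matrix.sum_apply]
      congr 1
      ext r
      simp [matCongr]
    rw [h1]
    have h2 : f (M i j) = ∑ r : Fin k, star (B r i) * B r j := by
      have := congrFun (congrFun hB i) j
      simp only [Matrix.of_apply] at this
      rw [this]
      simp [Matrix.mul_apply, Matrix.conjTranspose_apply, mul_comm]
    simp only [mmap, Matrix.map_apply, LinearMap.smulRight_apply, h2, Finset.sum_smul]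
  rw [key]
  exact pos_sum T _ _ (fun r _ => T.pos_congr _ hw)

end

end St13
namespace St13

noncomputable section

open Module

variable {V : Type} [AddCommGroup V] [Module ℂ V] [StarAddMonoid V] [StarModule ℂ V]

lemma sbPart_add (v w : V) : sbPart (v + w) = sbPart v + sbPart w := by
  simp only [sbPart, smul_add, neg_add, saPart_add]

lemma saPart_csmul (z : ℂ) (v : V) :
    saPart (z • v) = (z.re : ℂ) • saPart v + (z.im : ℂ) • saPart (Complex.I • v) := by
  have hz : z • v = (z.re : ℂ) • v + (z.im : ℂ) • (Complex.I • v) := by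
    rw [smul_smul, ← add_smul]
    congr 1
    simp [Complex.ext_iff]
  rw [hz, saPart_add, saPart_realSmul, saPart_realSmul]

lemma sbPart_csmul (z : ℂ) (v : V) :
    sbPart (z • v) = (z.re : ℂ) • sbPart v + (z.im : ℂ) • saPart v := by
  have h1 : sbPart (z • v) = saPart (z • (-(Complex.I • v))) := by
    rw [sbPart]
    congr 1
    rw [smul_comm, smul_neg]
  rw [h1, saPart_csmul]
  congr 1
  rw [show Complex.I • (-(Complex.I • v)) = v by
    rw [smul_neg, smul_smul, Complex.I_mul_I, neg_smul, one_smul, neg_neg]]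

lemma sbPart_of_sa {v : V} (hv : star v = v) : sbPart v = 0 := by
  have : star (-(Complex.I • v)) = Complex.I • v := by
    rw [star_neg, star_smul, Complex.star_def, Complex.conj_I, neg_smul, neg_neg, hv]
  rw [sbPart, saPart, this]
  simp

/-- self-adjoint part as an additive monoid hom, for `map_sum` -/
def saHom : V →+ V := AddMonoidHom.mk' saPart saPart_add

section Sep

variable [FiniteDimensional ℂ V] (S : OSStruct V)

/-- the coordinate equivalence -/
def eV : V ≃ₗ[ℂ] (Fin (finrank ℂ V) → ℂ) := (Module.finBasis ℂ V).equivFun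

variable {S}

lemma eV_symm_real_smul (r : ℝ) (x : Fin (finrank ℂ V) → ℂ) :
    (eV (V := V)).symm (r • x) = (r : ℂ) • (eV (V := V)).symm x := by
  have : r • x = (r : ℂ) • x := by
    funext i
    simp [Complex.real_smul]
  rw [this, map_smul]

variable (S)

/-- the image of the positive cone in coordinates -/
def Qim : Set (Fin (finrank ℂ V) → ℂ) := {x | posElem S.pos ((eV (V := V)).symm x)}

variable {S}

lemma Qim_zero : (0 : Fin (finrank ℂ V) → ℂ) ∈ Qim S := by
  show posElem S.pos _
  rw [map_zero]
  exact pe_zero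

lemma Qim_add {x y} (hx : x ∈ Qim S) (hy : y ∈ Qim S) : x + y ∈ Qim S := by
  show posElem S.pos _
  rw [map_add]
  exact pe_add hx hy

lemma Qim_smul {r : ℝ} (hr : 0 ≤ r) {x} (hx : x ∈ Qim S) : r • x ∈ Qim S := by
  show posElem S.pos _
  rw [eV_symm_real_smul]
  exact pe_smul r hr hx

lemma Qim_convex : Convex ℝ (Qim S) := by
  intro x hx y hy a b ha hb _
  exact Qim_add (Qim_smul ha hx) (Qim_smul hb hy)

/-- the star operation in coordinates, as a real linear map -/
def starL : (Fin (finrank ℂ V) → ℂ) →ₗ[ℝ] (Fin (finrank ℂ V) → ℂ) where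
  toFun x := eV (V := V) (star ((eV (V := V)).symm x))
  map_add' x y := by
    show eV (V := V) (star ((eV (V := V)).symm (x + y)))
      = eV (V := V) (star ((eV (V := V)).symm x)) + eV (V := V) (star ((eV (V := V)).symm y))
    rw [map_add, star_add, map_add]
  map_smul' r x := by
    show eV (V := V) (star ((eV (V := V)).symm (r • x)))
      = r • eV (V := V) (star ((eV (V := V)).symm x))
    rw [eV_symm_real_smul, star_smul, Complex.star_def, Complex.conj_ofReal, map_smul]
    funext i
    simp [Complex.real_smul]

lemma starL_apply (x : Fin (finrank ℂ V) → ℂ) :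
    starL x = eV (V := V) (star ((eV (V := V)).symm x)) := rfl

lemma isClosed_fix : IsClosed {x : Fin (finrank ℂ V) → ℂ | starL x = x} :=
  isClosed_eq (starL (V := V)).continuous_of_finiteDimensional continuous_id

lemma mem_fix_iff {x : Fin (finrank ℂ V) → ℂ} :
    starL x = x ↔ star ((eV (V := V)).symm x) = (eV (V := V)).symm x := by
  constructor
  · intro h
    have := congrArg (eV (V := V)).symm h
    rwa [starL_apply, LinearEquiv.symm_apply_apply] at this
  · intro h
    rw [starL_apply, h, LinearEquiv.apply_symm_apply]

lemma Qim_subset_fix : Qim S ⊆ {x : Fin (finrank ℂ V) → ℂ | starL x = x} := by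
  intro x hx
  exact mem_fix_iff.mpr (pe_star hx)

/-- combining order-unit bounds with a real scalar -/
lemma pe_piece {a : V} {r1 r2 : ℝ} (h1 : posElem S.pos ((r1 : ℂ) • S.unit + a))
    (h2 : posElem S.pos ((r2 : ℂ) • S.unit + (-a))) (hr1 : 0 ≤ r1) (hr2 : 0 ≤ r2)
    (t : ℝ) :
    posElem S.pos (((|t| * (r1 + r2) : ℝ) : ℂ) • S.unit + (t : ℂ) • a) := by
  rcases le_or_gt 0 t with ht | ht
  · have h := pe_smul t ht h1
    have he : (t : ℂ) • ((r1 : ℂ) • S.unit + a)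
        = ((t * r1 : ℝ) : ℂ) • S.unit + (t : ℂ) • a := by
      push_cast
      rw [smul_add, smul_smul]
    rw [he] at h
    exact pe_pad h (by rw [abs_of_nonneg ht]; nlinarith)
  · have h := pe_smul (-t) (by linarith) h2
    have he : ((-t : ℝ) : ℂ) • ((r2 : ℂ) • S.unit + (-a))
        = ((-t * r2 : ℝ) : ℂ) • S.unit + (t : ℂ) • a := by
      push_cast
      rw [smul_add, smul_smul, smul_neg, ← neg_smul, neg_neg]
    rw [he] at h
    exact pe_pad h (by rw [abs_of_neg ht]; nlinarith)

lemma pe_sum_units {ι : Type*} (s : Finset ι) (α : ι → ℝ) (w : ι → V)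
    (h : ∀ i ∈ s, posElem S.pos ((α i : ℂ) • S.unit + w i)) :
    posElem S.pos (((∑ i ∈ s, α i : ℝ) : ℂ) • S.unit + ∑ i ∈ s, w i) := by
  classical
  induction s using Finset.induction_on with
  | empty => simpa using pe_zero
  | @insert i s hni ih =>
    rw [Finset.sum_insert hni, Finset.sum_insert hni]
    have := pe_add (h i (Finset.mem_insert_self _ _))
      (ih (fun j hj => h j (Finset.mem_insert_of_mem hj)))
    have he : (α i : ℂ) • S.unit + w i + (((∑ j ∈ s, α j : ℝ) : ℂ) • S.unit + ∑ j ∈ s, w j)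
        = ((α i + ∑ j ∈ s, α j : ℝ) : ℂ) • S.unit + (w i + ∑ j ∈ s, w j) := by
      push_cast
      rw [add_smul]
      abel
    rwa [he] at this

lemma eV_symm_apply (x : Fin (finrank ℂ V) → ℂ) :
    (eV (V := V)).symm x = ∑ k, x k • (Module.finBasis ℂ V) k :=
  Basis.equivFun_symm_apply _ _

/-- uniform order bound on self-adjoint elements in terms of the coordinate norm -/
lemma exists_bound :
    ∃ C : ℝ, 0 < C ∧ ∀ x : Fin (finrank ℂ V) → ℂ,
      star ((eV (V := V)).symm x) = (eV (V := V)).symm x →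
      posElem S.pos (((C * ‖x‖ : ℝ) : ℂ) • S.unit + (eV (V := V)).symm x) := by
  classical
  set b := Module.finBasis ℂ V with hb
  set A : Fin (finrank ℂ V) → V := fun k => saPart (b k) with hA
  set Cc : Fin (finrank ℂ V) → V := fun k => saPart (Complex.I • b k) with hCc
  have hAsa : ∀ k, star (A k) = A k := fun k => star_saPart _
  have hCsa : ∀ k, star (Cc k) = Cc k := fun k => star_saPart _
  choose r1 hr1 hA1 using fun k => pe_orderUnit (S := S) (hAsa k)
  choose r2 hr2 hA2 using fun k =>
    pe_orderUnit (S := S) (a := -(A k)) (by rw [star_neg, hAsa k])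
  choose s1 hs1 hC1 using fun k => pe_orderUnit (S := S) (hCsa k)
  choose s2 hs2 hC2 using fun k =>
    pe_orderUnit (S := S) (a := -(Cc k)) (by rw [star_neg, hCsa k])
  set Sig0 : ℝ := ∑ k, ((r1 k + r2 k) + (s1 k + s2 k)) with hSig0
  have hSig0nn : 0 ≤ Sig0 := Finset.sum_nonneg (fun k _ => by
    have := (hr1 k).le; have := (hr2 k).le; have := (hs1 k).le; have := (hs2 k).le
    linarith)
  refine ⟨Sig0 + 1, by linarith, ?_⟩
  intro x hsa
  set D : ℝ := ∑ k, (|(x k).re| * (r1 k + r2 k) + |(x k).im| * (s1 k + s2 k)) with hD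
  have hxdec : (eV (V := V)).symm x
      = ∑ k, (((x k).re : ℂ) • A k + ((x k).im : ℂ) • Cc k) := by
    conv_lhs => rw [← saPart_of_sa hsa]
    rw [eV_symm_apply, show saPart (∑ k, x k • b k) = ∑ k, saPart (x k • b k) from
      map_sum saHom _ _]
    exact Finset.sum_congr rfl (fun k _ => saPart_csmul _ _)
  have hmain : posElem S.pos ((D : ℂ) • S.unit + (eV (V := V)).symm x) := by
    rw [hxdec, hD]
    apply pe_sum_units
    intro k _
    have p1 := pe_piece (hA1 k) (hA2 k) (hr1 k).le (hr2 k).le ((x k).re)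
    have p2 := pe_piece (hC1 k) (hC2 k) (hs1 k).le (hs2 k).le ((x k).im)
    have h3 := pe_add p1 p2
    have he : ((|(x k).re| * (r1 k + r2 k) : ℝ) : ℂ) • S.unit + ((x k).re : ℂ) • A k
        + (((|(x k).im| * (s1 k + s2 k) : ℝ) : ℂ) • S.unit + ((x k).im : ℂ) • Cc k)
        = ((|(x k).re| * (r1 k + r2 k) + |(x k).im| * (s1 k + s2 k) : ℝ) : ℂ) • S.unit
          + (((x k).re : ℂ) • A k + ((x k).im : ℂ) • Cc k) := by
      push_cast
      rw [add_smul]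
      abel
    rwa [he] at h3
  have hle : D ≤ (Sig0 + 1) * ‖x‖ := by
    have h1 : D ≤ ‖x‖ * Sig0 := by
      rw [hD, hSig0, Finset.mul_sum]
      apply Finset.sum_le_sum
      intro k _
      have hre : |(x k).re| ≤ ‖x‖ := le_trans (Complex.abs_re_le_norm _)
        (by exact norm_le_pi_norm x k)
      have him : |(x k).im| ≤ ‖x‖ := le_trans (Complex.abs_im_le_norm _)
        (by exact norm_le_pi_norm x k)
      have := (hr1 k).le; have := (hr2 k).le; have := (hs1 k).le; have := (hs2 k).le
      have := abs_nonneg ((x k).re); have := abs_nonneg ((x k).im)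
      nlinarith
    have h2 : ‖x‖ * Sig0 ≤ ‖x‖ * (Sig0 + 1) :=
      mul_le_mul_of_nonneg_left (by linarith) (norm_nonneg x)
    calc D ≤ ‖x‖ * Sig0 := h1
      _ ≤ ‖x‖ * (Sig0 + 1) := h2
      _ = (Sig0 + 1) * ‖x‖ := mul_comm _ _
  exact pe_pad hmain hle

lemma Qim_closed : IsClosed (Qim S) := by
  rw [← isOpen_compl_iff] at *
  rw [isOpen_compl_iff]
  apply isClosed_of_closure_subset
  intro x hx
  have hxfix : starL x = x := by
    have h1 : closure (Qim S) ⊆ closure {y : Fin (finrank ℂ V) → ℂ | starL y = y} :=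
      closure_mono Qim_subset_fix
    have h2 := h1 hx
    rwa [IsClosed.closure_eq isClosed_fix] at h2
  have hxsa : star ((eV (V := V)).symm x) = (eV (V := V)).symm x := mem_fix_iff.mp hxfix
  show posElem S.pos _
  apply pe_archimedean
  intro ε hε
  obtain ⟨C, hC, hbound⟩ := exists_bound (S := S)
  obtain ⟨y, hyQ, hdist⟩ := Metric.mem_closure_iff.mp hx (ε / C) (by positivity)
  set w := x - y with hw
  have hysa : star ((eV (V := V)).symm y) = (eV (V := V)).symm y := pe_star hyQ
  have hwsa : star ((eV (V := V)).symm w) = (eV (V := V)).symm w := by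
    rw [hw, map_sub, star_sub, hxsa, hysa]
  have h1 := hbound w hwsa
  have hnorm : C * ‖w‖ ≤ ε := by
    have hwd : ‖w‖ = dist x y := by rw [dist_eq_norm]
    rw [hwd, mul_comm]
    exact ((lt_div_iff₀ hC).mp hdist).le
  have h2 := pe_pad h1 hnorm
  have h3 := pe_add h2 hyQ
  have he : (ε : ℂ) • S.unit + (eV (V := V)).symm w + (eV (V := V)).symm y
      = (ε : ℂ) • S.unit + (eV (V := V)).symm x := by
    rw [hw, map_sub]
    abel
  rwa [he] at h3

lemma mem_Qim_of_forall (x : Fin (finrank ℂ V) → ℂ)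
    (hx : ∀ g : (Fin (finrank ℂ V) → ℂ) →L[ℝ] ℝ,
      (∀ y ∈ Qim S, 0 ≤ g y) → 0 ≤ g x) : x ∈ Qim S := by
  by_contra hmem
  obtain ⟨f, u, h1, h2⟩ :=
    geometric_hahn_banach_closed_point (Qim_convex (S := S)) Qim_closed hmem
  have h0 : (0 : ℝ) < u := by
    have := h1 0 Qim_zero
    simpa using this
  have hneg : ∀ y ∈ Qim S, f y ≤ 0 := by
    intro y hy
    by_contra hpos
    push_neg at hpos
    have hc : (u / f y) • y ∈ Qim S := Qim_smul (div_nonneg h0.le hpos.le) hy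
    have h3 := h1 _ hc
    rw [map_smul, smul_eq_mul, div_mul_cancel₀ _ (ne_of_gt hpos)] at h3
    exact lt_irrefl _ h3
  have h4 := hx (-f) (fun y hy => by
    rw [ContinuousLinearMap.neg_apply]
    linarith [hneg y hy])
  rw [ContinuousLinearMap.neg_apply] at h4
  linarith

/-- complexification of a real positive functional -/
def posFOfReal (g : (Fin (finrank ℂ V) → ℂ) →L[ℝ] ℝ) : Module.Dual ℂ V where
  toFun v := ((g (eV (V := V) (saPart v)) : ℝ) : ℂ)
    + Complex.I * ((g (eV (V := V) (sbPart v)) : ℝ) : ℂ)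
  map_add' v w := by
    show ((g (eV (V := V) (saPart (v + w))) : ℝ) : ℂ)
        + Complex.I * ((g (eV (V := V) (sbPart (v + w))) : ℝ) : ℂ) = _
    rw [saPart_add, sbPart_add, map_add, map_add, map_add, map_add]
    push_cast
    ring
  map_smul' c v := by
    show ((g (eV (V := V) (saPart (c • v))) : ℝ) : ℂ)
        + Complex.I * ((g (eV (V := V) (sbPart (c • v))) : ℝ) : ℂ)
      = (RingHom.id ℂ) c • (((g (eV (V := V) (saPart v)) : ℝ) : ℂ)
        + Complex.I * ((g (eV (V := V) (sbPart v)) : ℝ) : ℂ))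
    rw [RingHom.id_apply, smul_eq_mul]
    have hgr : ∀ (t : ℝ) (z : V), g (eV (V := V) ((t : ℂ) • z)) = t * g (eV (V := V) z) := by
      intro t z
      rw [map_smul]
      have : (t : ℂ) • (eV (V := V) z) = t • (eV (V := V) z) := by
        funext i
        simp [Complex.real_smul]
      rw [this, map_smul, smul_eq_mul]
    rw [saPart_csmul, sbPart_csmul, saPart_I_smul, smul_neg, map_add, map_add, map_add,
      map_add, map_neg, map_neg]
    rw [hgr, hgr, hgr, hgr]
    have key : ∀ (x y : ℝ),
        ((c.re * x : ℝ) : ℂ) + -((c.im * y : ℝ) : ℂ)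
          + Complex.I * (((c.re * y : ℝ) : ℂ) + ((c.im * x : ℝ) : ℂ))
        = c * (((x : ℝ) : ℂ) + Complex.I * ((y : ℝ) : ℂ)) := by
      intro x y
      apply Complex.ext <;> simp <;> ring
    have hk := key (g (eV (V := V) (saPart v))) (g (eV (V := V) (sbPart v)))
    push_cast at hk ⊢
    convert hk using 2 <;> ring

lemma posFOfReal_isPos {g : (Fin (finrank ℂ V) → ℂ) →L[ℝ] ℝ}
    (hg : ∀ y ∈ Qim S, 0 ≤ g y) : IsPosF S (posFOfReal g) := by
  intro v hv
  have hsa : star v = v := pe_star hv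
  have h1 : posFOfReal (V := V) g v = ((g (eV (V := V) v) : ℝ) : ℂ) := by
    show ((g (eV (V := V) (saPart v)) : ℝ) : ℂ) + _ = _
    rw [saPart_of_sa hsa, sbPart_of_sa hsa, map_zero, map_zero]
    push_cast
    ring
  rw [h1]
  rw [Complex.zero_le_real]
  apply hg
  show posElem S.pos _
  rwa [LinearEquiv.symm_apply_apply]

/-- the separation theorem: positive functionals separate self-adjoint points -/
lemma sep_main {a : V} (ha : star a = a)
    (h : ∀ f : Module.Dual ℂ V, IsPosF S f → f a = 0) : a = 0 := by
  have key : ∀ g : (Fin (finrank ℂ V) → ℂ) →L[ℝ] ℝ,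
      (∀ y ∈ Qim S, 0 ≤ g y) → g (eV (V := V) a) = 0 := by
    intro g hg
    have h1 := h (posFOfReal g) (posFOfReal_isPos hg)
    have h2 : posFOfReal (V := V) g a = ((g (eV (V := V) a) : ℝ) : ℂ) := by
      show ((g (eV (V := V) (saPart a)) : ℝ) : ℂ) + _ = _
      rw [saPart_of_sa ha, sbPart_of_sa ha, map_zero, map_zero]
      push_cast
      ring
    rw [h2] at h1
    exact_mod_cast h1
  have h1 : eV (V := V) a ∈ Qim S :=
    mem_Qim_of_forall _ (fun g hg => le_of_eq (key g hg).symm)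
  have h2 : -(eV (V := V) a) ∈ Qim S := by
    apply mem_Qim_of_forall
    intro g hg
    rw [map_neg]
    rw [key g hg]
    simp
  have hp1 : posElem S.pos a := by
    have ha1 : posElem S.pos ((eV (V := V)).symm (eV (V := V) a)) := h1
    rwa [LinearEquiv.symm_apply_apply] at ha1
  have hp2 : posElem S.pos (-a) := by
    have ha2 : posElem S.pos ((eV (V := V)).symm (-(eV (V := V) a))) := h2
    rwa [map_neg, LinearEquiv.symm_apply_apply] at ha2
  exact pe_strict hp1 hp2

end Sep

end

end St13
namespace St13

noncomputable section

open Module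

variable {V : Type} [AddCommGroup V] [Module ℂ V] [StarAddMonoid V] [StarModule ℂ V]

lemma cmul_nonneg {s : ℝ} (hs : 0 ≤ s) {z : ℂ} (hz : 0 ≤ z) : 0 ≤ (s : ℂ) * z :=
  mul_nonneg (by rw [Complex.zero_le_real]; exact hs) hz

variable {S : OSStruct V}

/-- positive elements span the whole space -/
lemma span_pos_eq_top : Submodule.span ℂ {v : V | posElem S.pos v} = ⊤ := by
  rw [Submodule.eq_top_iff']
  intro v
  have hmem : ∀ a : V, star a = a → a ∈ Submodule.span ℂ {v : V | posElem S.pos v} := by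
    intro a ha
    obtain ⟨p, q, hp, hq, rfl⟩ := sa_sub (S := S) ha
    exact Submodule.sub_mem _ (Submodule.subset_span hp) (Submodule.subset_span hq)
  rw [decomp v]
  exact Submodule.add_mem _ (hmem _ (star_saPart v))
    (Submodule.smul_mem _ _ (hmem _ (star_sbPart v)))

/-- if the unit vanishes, the space is trivial -/
lemma unit_ne_zero_of_nontrivial (h : ∃ v : V, v ≠ 0) : S.unit ≠ 0 := by
  rintro h0
  obtain ⟨v, hv⟩ := h
  apply hv
  have hsa : ∀ a : V, star a = a → a = 0 := by
    intro a ha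
    have h1 : posElem S.pos a := by
      obtain ⟨r, _, hr⟩ := pe_orderUnit (S := S) ha
      rwa [h0, smul_zero, zero_add] at hr
    have h2 : posElem S.pos (-a) := by
      obtain ⟨r, _, hr⟩ := pe_orderUnit (S := S) (a := -a) (by rw [star_neg, ha])
      rwa [h0, smul_zero, zero_add] at hr
    exact pe_strict h1 h2
  rw [decomp v, hsa _ (star_saPart v), hsa _ (star_sbPart v)]
  simp

variable [FiniteDimensional ℂ V]

lemma forall_isPosF_of_forall_state {a : V}
    (h : ∀ f, osState S.pos S.unit f → f a = 0) :
    ∀ f : Module.Dual ℂ V, IsPosF S f → f a = 0 := by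
  intro f hf
  by_cases hne : f = 0
  · simp [hne]
  · obtain ⟨r, hr, hfe⟩ := isPosF_unit_re_pos hf hne
    have hstate : osState S.pos S.unit (((r : ℂ)⁻¹) • f) := by
      constructor
      · show (r : ℂ)⁻¹ • f S.unit = 1
        rw [hfe, smul_eq_mul, inv_mul_cancel₀ (by exact_mod_cast hr.ne')]
      · intro v hv
        show 0 ≤ (r : ℂ)⁻¹ • f v
        rw [smul_eq_mul, ← Complex.ofReal_inv]
        exact cmul_nonneg (by positivity) (hf v hv)
    have := h _ hstate
    have h2 : (r : ℂ)⁻¹ • f a = 0 := this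
    rw [smul_eq_mul] at h2
    have hrne : ((r : ℂ)⁻¹) ≠ 0 := by
      simp only [ne_eq, inv_eq_zero]
      exact_mod_cast hr.ne'
    exact (mul_eq_zero.mp h2).resolve_left hrne

/-- the states span the dual space -/
lemma span_states_eq_top (S : OSStruct V) :
    Submodule.span ℂ {f : Module.Dual ℂ V | osState S.pos S.unit f} = ⊤ := by
  by_contra hne
  obtain ⟨ξ, hξne, hξ⟩ := Submodule.exists_dual_map_eq_bot_of_lt_top
    (lt_top_iff_ne_top.mpr hne) inferInstance
  set v := (Module.evalEquiv ℂ V).symm ξ with hv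
  have hvne : v ≠ 0 := by
    intro h0
    apply hξne
    have he : ξ = Module.evalEquiv ℂ V v := by rw [hv, LinearEquiv.apply_symm_apply]
    rw [he, h0, map_zero]
  have hstates : ∀ f, osState S.pos S.unit f → f v = 0 := by
    intro f hfstate
    have hmem : f ∈ Submodule.span ℂ {f : Module.Dual ℂ V | osState S.pos S.unit f} :=
      Submodule.subset_span hfstate
    have h1 : ξ f ∈ (Submodule.span ℂ
        {f : Module.Dual ℂ V | osState S.pos S.unit f}).map ξ :=
      Submodule.mem_map_of_mem hmem
    rw [hξ, Submodule.mem_bot] at h1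
    rw [hv, Module.apply_evalEquiv_symm_apply]
    exact h1
  -- states kill both self-adjoint parts of v
  have hparts : ∀ f, osState S.pos S.unit f → f (saPart v) = 0 ∧ f (sbPart v) = 0 := by
    intro f hfstate
    have hpos : IsPosF S f := hfstate.2
    have haux : ∀ w : V, f w = 0 → f (saPart w) = 0 := by
      intro w hw
      rw [saPart, map_smul, map_add, hw, isPosF_star hpos, hw, map_zero]
      simp
    refine ⟨haux v (hstates f hfstate), haux _ ?_⟩
    rw [map_neg, map_smul, hstates f hfstate, smul_zero, neg_zero]
  have ha : saPart v = 0 := sep_main (star_saPart v)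
    (forall_isPosF_of_forall_state (fun f hf => (hparts f hf).1))
  have hb : sbPart v = 0 := sep_main (star_sbPart v)
    (forall_isPosF_of_forall_state (fun f hf => (hparts f hf).2))
  apply hvne
  rw [decomp v, ha, hb, smul_zero, add_zero]

end

end St13
open St13 Module

/-- Any two finite dimensional operator systems of the same dimension
admit a surjective ucp map between them. -/
theorem statement13 {V W : Type} [AddCommGroup V] [Module ℂ V] [StarAddMonoid V] [StarModule ℂ V] [AddCommGroup W] [Module ℂ W] [StarAddMonoid W] [StarModule ℂ W]
    [FiniteDimensional ℂ V] [FiniteDimensional ℂ W]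
    (S : OSStruct V) (T : OSStruct W) (n : ℕ)
    (hV : Module.finrank ℂ V = n) (hW : Module.finrank ℂ W = n) :
    ∃ φ : V →ₗ[ℂ] W, osUCP S.pos S.unit T.pos T.unit φ ∧ Function.Surjective φ := by
  classical
  rcases Nat.eq_zero_or_pos n with hn0 | hnpos
  · -- trivial case
    subst hn0
    haveI : Subsingleton V := Module.finrank_zero_iff.mp hV
    haveI : Subsingleton W := Module.finrank_zero_iff.mp hW
    refine ⟨0, ⟨?_, Subsingleton.elim _ _⟩, fun w => ⟨0, Subsingleton.elim _ _⟩⟩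
    intro k M hM
    have h : mmap (0 : V →ₗ[ℂ] W) M = unitMat T.unit k :=
      Matrix.ext (fun i j => Subsingleton.elim _ _)
    rw [h]
    exact T.unit_pos k
  · -- states basis on the dual of V
    obtain ⟨bS, hbSsub, hbSspan, hbSli⟩ := exists_linearIndependent ℂ
      {f : Module.Dual ℂ V | osState S.pos S.unit f}
    rw [span_states_eq_top S] at hbSspan
    let BS : Basis bS ℂ (Module.Dual ℂ V) :=
      Basis.mk hbSli (by rw [Subtype.range_coe, hbSspan])
    -- positive basis of W containing the unit
    have huW : T.unit ≠ 0 := by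
      apply unit_ne_zero_of_nontrivial
      haveI : Nontrivial W := Module.nontrivial_of_finrank_pos (by rw [hW]; exact hnpos)
      obtain ⟨x, hx⟩ := exists_ne (0 : W)
      exact ⟨x, hx⟩
    obtain ⟨bW, hbWsub, hbWsup, hbWsup2, hbWli⟩ := exists_linearIndepOn_id_extension
      (s := {T.unit}) (t := {x : W | posElem T.pos x})
      (LinearIndepOn.singleton (R := ℂ) (v := id) huW)
      (Set.singleton_subset_iff.mpr pe_unit)
    replace hbWli : LinearIndependent ℂ ((↑) : bW → W) := hbWli
    have hbWspan : Submodule.span ℂ bW = ⊤ := by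
      rw [eq_top_iff, ← span_pos_eq_top (S := T)]
      exact Submodule.span_le.mpr hbWsup2
    let BW : Basis bW ℂ W := Basis.mk hbWli (by rw [Subtype.range_coe, hbWspan])
    haveI : Fintype bW := FiniteDimensional.fintypeBasisIndex BW
    haveI : Fintype bS := FiniteDimensional.fintypeBasisIndex BS
    have hcard : Fintype.card bW = Fintype.card bS := by
      rw [← Module.finrank_eq_card_basis BW, ← Module.finrank_eq_card_basis BS,
        Subspace.dual_finrank_eq, hV, hW]
    let eqv : bW ≃ bS := Fintype.equivOfCardEq hcard
    set f : bW → Module.Dual ℂ V := fun i => ((eqv i : Module.Dual ℂ V)) with hf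
    set w : bW → W := fun i => (i : W) with hwdef
    have hfstate : ∀ i, osState S.pos S.unit (f i) := fun i => hbSsub (eqv i).2
    have hwpos : ∀ i, posElem T.pos (w i) := fun i => hbWsub i.2
    -- spanning property of the states family
    have hfspan : ∀ v : V, (∀ i, f i v = 0) → v = 0 := by
      intro v hv
      rw [← Module.forall_dual_apply_eq_zero_iff ℂ v]
      intro φ
      have hφ : φ ∈ Submodule.span ℂ bS := by rw [hbSspan]; trivial
      induction hφ using Submodule.span_induction with
      | mem x hx =>
        simpa [hf] using hv (eqv.symm ⟨x, hx⟩)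
      | zero => simp
      | add x y _ _ hx hy => simp [hx, hy]
      | smul c x _ hx => simp [hx]
    -- the positive perturbation
    set sW : W := ∑ i, w i with hsW
    have hsWsa : star sW = sW := by
      rw [hsW, star_sum]
      exact Finset.sum_congr rfl (fun i _ => pe_star (hwpos i))
    obtain ⟨r, hr, hrpos⟩ := pe_orderUnit (S := T) (a := -sW) (by rw [star_neg, hsWsa])
    set t : ℝ := r⁻¹ with ht
    have htpos : 0 < t := inv_pos.mpr hr
    set p : W := (t : ℂ) • ((r : ℂ) • T.unit + (-sW)) with hp
    have hppos : posElem T.pos p := pe_smul t htpos.le hrpos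
    have hpdef : p = T.unit - (t : ℂ) • sW := by
      rw [hp, smul_add, smul_smul, smul_neg, ← Complex.ofReal_mul, ht,
        inv_mul_cancel₀ hr.ne', Complex.ofReal_one, one_smul, sub_eq_add_neg]
    have hi0mem : T.unit ∈ bW := hbWsup (Set.mem_singleton _)
    set i0 : bW := ⟨T.unit, hi0mem⟩ with hi0
    -- the map
    set φ : V →ₗ[ℂ] W :=
      (f i0).smulRight p + ∑ i, ((t : ℂ) • f i).smulRight (w i) with hφdef
    have htfpos : ∀ i, IsPosF S ((t : ℂ) • f i) := by
      intro i v hv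
      have h1 : ((t : ℂ) • f i) v = (t : ℂ) * f i v := rfl
      rw [h1]
      exact cmul_nonneg htpos.le ((hfstate i).2 v hv)
    have hcp : osCP S.pos T.pos φ := by
      rw [hφdef]
      exact osCP_add (osCP_smulRight (hfstate i0).2 hppos)
        (osCP_sum Finset.univ _ (fun i _ => osCP_smulRight (htfpos i) (hwpos i)))
    have happ : ∀ v, φ v = (f i0 v) • p + ∑ i, ((t : ℂ) * f i v) • w i := by
      intro v
      rw [hφdef]
      simp only [LinearMap.add_apply, LinearMap.smulRight_apply, LinearMap.sum_apply,
        LinearMap.smul_apply, smul_eq_mul]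
    have hφe : φ S.unit = T.unit := by
      rw [happ, (hfstate i0).1, one_smul, hpdef]
      have h1 : ∀ i : bW, ((t : ℂ) * f i S.unit) • w i = (t : ℂ) • w i := by
        intro i
        rw [(hfstate i).1, mul_one]
      rw [Finset.sum_congr rfl (fun i _ => h1 i), ← Finset.smul_sum, ← hsW]
      abel
    have hinj : Function.Injective φ := by
      rw [injective_iff_map_eq_zero]
      intro v hv0
      set c : bW → ℂ := fun i =>
        (if i = i0 then (1 : ℂ) else 0) * (f i0 v) - (t : ℂ) * (f i0 v) + (t : ℂ) * f i v
        with hc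
      have hexp : ∑ i, c i • w i = 0 := by
        have h1 : ∑ i, c i • w i = φ v := by
          rw [happ]
          have h2 : (f i0 v) • p
              = ∑ i, ((if i = i0 then (1 : ℂ) else 0) * (f i0 v) - (t : ℂ) * (f i0 v)) • w i := by
            rw [hpdef, smul_sub]
            have h3 : (f i0 v) • T.unit = ∑ i, ((if i = i0 then (1 : ℂ) else 0) * (f i0 v)) • w i := by
              rw [Finset.sum_congr rfl (fun i _ => by rw [ite_mul, one_mul, zero_mul, ite_smul, zero_smul])]
              rw [Finset.sum_ite_eq' Finset.univ i0 (fun i => (f i0 v) • w i)]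
              simp [hwdef, hi0]
            rw [h3, hsW, Finset.smul_sum, Finset.smul_sum, ← Finset.sum_sub_distrib]
            apply Finset.sum_congr rfl
            intro i _
            rw [sub_smul, smul_smul, mul_comm (f i0 v) ((t : ℂ))]
          rw [h2, ← Finset.sum_add_distrib]
          apply Finset.sum_congr rfl
          intro i _
          simp only [hc]
          rw [add_smul]
        rw [h1, hv0]
      have hcz := Fintype.linearIndependent_iff.mp hbWli c hexp
      have hfi0 : f i0 v = 0 := by
        have := hcz i0
        simpa [hc] using this
      have hfall : ∀ i, f i v = 0 := by
        intro i
        have := hcz i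
        rw [hc, hfi0] at this
        simp only [mul_zero, sub_zero, zero_add] at this
        have htne : (t : ℂ) ≠ 0 := by exact_mod_cast htpos.ne'
        exact (mul_eq_zero.mp this).resolve_left htne
      exact hfspan v hfall
    have hsurj : Function.Surjective φ :=
      (LinearMap.injective_iff_surjective_of_finrank_eq_finrank (by rw [hV, hW])).mp hinj
    exact ⟨φ, ⟨hcp, hφe⟩, hsurj⟩
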